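/- The plus state |+⟩ = 2^{-n/2}(1,…,1)ᵀ is an eigenvector of the mixing Hamiltonian H_B = -Σ_{i=1}^n σ^x_i with eigenvalue -n; consequently, for every p ≥ 1 and every (β⋆,γ⋆) ∈ ℝ^p × ℝ^p, the derivative of the depth-(p+1) QAOA state with respect to β_1 at the padded point Γ^{p+1}(1,1) equals i·n times the depth-p QAOA state |β⋆,γ⋆⟩, and therefore ∂E_{p+1}/∂β_1 vanishes at Γ^{p+1}(1,1). -/

import Mathlib

open Matrix Complex

noncomputable section

/-- Computational basis index set for `n` qubits, identified with `Fin 2 ^ n` via binary digits. -/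
abbrev QIdx (n : ℕ) := Fin n → Fin 2

/-- The Pauli X matrix. -/
def pauliX : Matrix (Fin 2) (Fin 2) ℂ := !![0, 1; 1, 0]

/-- The Pauli Z matrix. -/
def pauliZ : Matrix (Fin 2) (Fin 2) ℂ := !![1, 0; 0, -1]

/-- The `n`-fold Kronecker product with `M` in the `i`-th tensor factor and the 2×2 identity in
every other factor, realized as a matrix on `ℂ^(2^n)` with indices `Fin n → Fin 2`. -/
def pauliAt {n : ℕ} (M : Matrix (Fin 2) (Fin 2) ℂ) (i : Fin n) :
    Matrix (QIdx n) (QIdx n) ℂ :=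
  Matrix.of fun s t => ∏ j, if j = i then M (s j) (t j) else if s j = t j then 1 else 0

/-- `σ^x_i`. -/
def sigmaX {n : ℕ} (i : Fin n) : Matrix (QIdx n) (QIdx n) ℂ := pauliAt pauliX i

/-- `σ^z_i`. -/
def sigmaZ {n : ℕ} (i : Fin n) : Matrix (QIdx n) (QIdx n) ℂ := pauliAt pauliZ i

lemma sigmaZ_eq_diagonal {n : ℕ} (i : Fin n) :
    sigmaZ i = Matrix.diagonal (fun s => pauliZ (s i) (s i)) := by
  ext s t
  simp only [sigmaZ, pauliAt, Matrix.of_apply, Matrix.diagonal_apply]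
  by_cases h : s = t
  · subst h
    simp [Finset.prod_ite_eq']
  · rw [if_neg h]
    obtain ⟨j₀, hj₀⟩ := Function.ne_iff.mp h
    refine Finset.prod_eq_zero (Finset.mem_univ j₀) ?_
    by_cases hji : j₀ = i
    · subst hji
      rw [if_pos rfl]
      have hz : ∀ a b : Fin 2, a ≠ b → pauliZ a b = 0 := by
        intro a b hab
        fin_cases a <;> fin_cases b <;> simp_all [pauliZ]
      exact hz _ _ hj₀
    · rw [if_neg hji, if_neg hj₀]

lemma sigmaZ_mul_comm {n : ℕ} (i j : Fin n) : sigmaZ i * sigmaZ j = sigmaZ j * sigmaZ i := by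
  rw [sigmaZ_eq_diagonal, sigmaZ_eq_diagonal, Matrix.diagonal_mul_diagonal,
    Matrix.diagonal_mul_diagonal]
  ext s
  simp [mul_comm]

/-- The MaxCut Hamiltonian `H_C = Σ_{{i,j} ∈ E} σ^z_i σ^z_j`. -/
def hamC (n : ℕ) (G : SimpleGraph (Fin n)) [DecidableRel G.Adj] :
    Matrix (QIdx n) (QIdx n) ℂ :=
  ∑ e ∈ G.edgeFinset,
    Sym2.lift ⟨fun i j => sigmaZ i * sigmaZ j, fun i j => sigmaZ_mul_comm i j⟩ e

/-- The mixing Hamiltonian `H_B = -Σ_i σ^x_i`. -/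
def hamB (n : ℕ) : Matrix (QIdx n) (QIdx n) ℂ := -(∑ i : Fin n, sigmaX i)

/-- `U_B(β) = exp(-i β H_B)`. -/
def uB (n : ℕ) (β : ℝ) : Matrix (QIdx n) (QIdx n) ℂ :=
  NormedSpace.exp ((-(Complex.I) * (β : ℂ)) • hamB n)

/-- `U_C(γ) = exp(-i γ H_C)`. -/
def uC (n : ℕ) (G : SimpleGraph (Fin n)) [DecidableRel G.Adj] (γ : ℝ) :
    Matrix (QIdx n) (QIdx n) ℂ :=
  NormedSpace.exp ((-(Complex.I) * (γ : ℂ)) • hamC n G)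

/-- The plus state `|+⟩ = 2^{-n/2} (1,…,1)ᵀ`. -/
def plusState (n : ℕ) : QIdx n → ℂ := fun _ => ((Real.sqrt 2 : ℂ))⁻¹ ^ n

/-- The `m`-th layer `U_B(β_{m+1}) U_C(γ_{m+1})` of the QAOA circuit (`m` is 0-indexed);
`1` if `m` is out of range. -/
def qaoaLayer (n : ℕ) (G : SimpleGraph (Fin n)) [DecidableRel G.Adj] {p : ℕ}
    (β γ : Fin p → ℝ) (m : ℕ) : Matrix (QIdx n) (QIdx n) ℂ :=
  if h : m < p then uB n (β ⟨m, h⟩) * uC n G (γ ⟨m, h⟩) else 1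

/-- The ordered product of the (0-indexed) layers `a, a+1, …, a+len-1` of the QAOA circuit, with
higher layers acting later (to the left). -/
def uProd (n : ℕ) (G : SimpleGraph (Fin n)) [DecidableRel G.Adj] {p : ℕ}
    (β γ : Fin p → ℝ) (a len : ℕ) : Matrix (QIdx n) (QIdx n) ℂ :=
  (((List.range' a len).reverse).map (qaoaLayer n G β γ)).prod

/-- The depth-`p` QAOA state `|β,γ⟩ = U_B(β_p) U_C(γ_p) ⋯ U_B(β_1) U_C(γ_1) |+⟩`. -/
def qaoaState (n : ℕ) (G : SimpleGraph (Fin n)) [DecidableRel G.Adj] {p : ℕ}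
    (β γ : Fin p → ℝ) : QIdx n → ℂ :=
  (uProd n G β γ 0 p).mulVec (plusState n)

/-- The depth-`p` QAOA cost function `E_p(β,γ) = ⟨β,γ| H_C |β,γ⟩` as a real-valued function on
`ℝ^p × ℝ^p`. -/
def energyE (n : ℕ) (G : SimpleGraph (Fin n)) [DecidableRel G.Adj] (p : ℕ)
    (x : (Fin p → ℝ) × (Fin p → ℝ)) : ℝ :=
  (star (qaoaState n G x.1 x.2) ⬝ᵥ (hamC n G).mulVec (qaoaState n G x.1 x.2)).re

/-- The point `Γ^{p+1}(i,j)` obtained from `(β⋆,γ⋆) ∈ ℝ^p × ℝ^p` by inserting a `0` at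
position `i` in the `β`-part and at position `j` in the `γ`-part. -/
def padded {p : ℕ} (x : (Fin p → ℝ) × (Fin p → ℝ)) (i j : Fin (p + 1)) :
    (Fin (p + 1) → ℝ) × (Fin (p + 1) → ℝ) :=
  (i.insertNth 0 x.1, j.insertNth 0 x.2)

/-- The coordinate direction in `ℝ^p × ℝ^p` corresponding to `β_l` (`Sum.inl l`) or
`γ_l` (`Sum.inr l`). -/
def coordDir {p : ℕ} : Fin p ⊕ Fin p → (Fin p → ℝ) × (Fin p → ℝ) :=
  Sum.elim (fun l => (Pi.single l 1, 0)) (fun l => (0, Pi.single l 1))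

/-- Partial derivative of a real function on `ℝ^p × ℝ^p` in the coordinate direction `a`. -/
def pderiv' {p : ℕ} (f : ((Fin p → ℝ) × (Fin p → ℝ)) → ℝ)
    (a : Fin p ⊕ Fin p) (x : (Fin p → ℝ) × (Fin p → ℝ)) : ℝ :=
  fderiv ℝ f x (coordDir a)

/-- The Hessian matrix of a real function on `ℝ^p × ℝ^p`, with rows and columns indexed by the
coordinates `β_1,…,β_p` (`Sum.inl`) and `γ_1,…,γ_p` (`Sum.inr`). -/
def hessian {p : ℕ} (f : ((Fin p → ℝ) × (Fin p → ℝ)) → ℝ)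
    (x : (Fin p → ℝ) × (Fin p → ℝ)) : Matrix (Fin p ⊕ Fin p) (Fin p ⊕ Fin p) ℝ :=
  Matrix.of fun a b => pderiv' (pderiv' f b) a x

/-- The commutator `[A, B] = AB - BA`. -/
def commMat {n : ℕ} (A B : Matrix (QIdx n) (QIdx n) ℂ) : Matrix (QIdx n) (QIdx n) ℂ :=
  A * B - B * A

end


section Aux

open NormedSpace

attribute [local instance] Matrix.linftyOpNormedRing Matrix.linftyOpNormedAlgebra

noncomputable section

instance matFinDimR (n : ℕ) : FiniteDimensional ℝ (Matrix (QIdx n) (QIdx n) ℂ) :=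
  Module.Finite.trans ℂ _

instance matComplete (n : ℕ) : CompleteSpace (Matrix (QIdx n) (QIdx n) ℂ) :=
  FiniteDimensional.complete ℝ _

/-- `mulVec` by a fixed vector as a continuous `ℝ`-linear map on matrices. -/
def mulVecCLM (n : ℕ) (v : QIdx n → ℂ) :
    Matrix (QIdx n) (QIdx n) ℂ →L[ℂ] (QIdx n → ℂ) :=
  LinearMap.toContinuousLinearMap
    { toFun := fun A => A.mulVec v
      map_add' := fun A B => Matrix.add_mulVec A B v
      map_smul' := fun c A => Matrix.smul_mulVec c A v }

@[simp] lemma mulVecCLM_apply {n : ℕ} (v : QIdx n → ℂ) (A : Matrix (QIdx n) (QIdx n) ℂ) :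
    mulVecCLM n v A = A.mulVec v := rfl

lemma sigmaX_mulVec_plus {n : ℕ} (i : Fin n) :
    (sigmaX i).mulVec (plusState n) = plusState n := by
  funext s
  have hX : ∀ a : Fin 2, pauliX a 0 + pauliX a 1 = 1 := by
    intro a; fin_cases a <;> simp [pauliX]
  have hrow : ∀ j : Fin n,
      (∑ a : Fin 2, if j = i then pauliX (s j) a else if s j = a then 1 else 0) = (1 : ℂ) := by
    intro j
    by_cases hji : j = i
    · subst hji
      simp only [if_pos rfl, Fin.sum_univ_two]
      exact hX (s j)
    · simp only [if_neg hji, Finset.sum_ite_eq, Finset.mem_univ, if_true]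
  have key : (∑ t : QIdx n,
      ∏ j, (if j = i then pauliX (s j) (t j) else if s j = (t j) then 1 else 0)) = (1 : ℂ) := by
    rw [← Fintype.piFinset_univ,
      Finset.sum_prod_piFinset (Finset.univ : Finset (Fin 2))
        (fun j a => if j = i then pauliX (s j) a else if s j = a then (1:ℂ) else 0)]
    simp [hrow]
  show (∑ t : QIdx n, sigmaX i s t * plusState n t) = plusState n s
  simp only [sigmaX, pauliAt, Matrix.of_apply, plusState]
  rw [← Finset.sum_mul, key, one_mul]

lemma sum_mulVec {n : ℕ} {ι : Type*} (s : Finset ι) (A : ι → Matrix (QIdx n) (QIdx n) ℂ)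
    (v : QIdx n → ℂ) : (∑ i ∈ s, A i).mulVec v = ∑ i ∈ s, (A i).mulVec v := by
  have h := map_sum (mulVecCLM n v) A s
  simp only [mulVecCLM_apply] at h
  exact h

lemma hamB_mulVec_plus (n : ℕ) :
    (hamB n).mulVec (plusState n) = (-(n : ℂ)) • plusState n := by
  rw [hamB, Matrix.neg_mulVec, sum_mulVec]
  simp only [sigmaX_mulVec_plus]
  rw [Finset.sum_const, Finset.card_univ, Fintype.card_fin]
  rw [neg_smul]
  congr 1
  exact (Nat.cast_smul_eq_nsmul ℂ n (plusState n)).symm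

lemma pow_mulVec_eigen {n : ℕ} (M : Matrix (QIdx n) (QIdx n) ℂ) (v : QIdx n → ℂ) (μ : ℂ)
    (h : M.mulVec v = μ • v) (k : ℕ) : (M ^ k).mulVec v = (μ ^ k) • v := by
  induction k with
  | zero => simp [Matrix.one_mulVec]
  | succ k ih =>
      rw [pow_succ, ← Matrix.mulVec_mulVec, h, Matrix.mulVec_smul, ih, smul_smul, mul_comm,
        ← pow_succ]

lemma exp_mulVec_eigen {n : ℕ} (M : Matrix (QIdx n) (QIdx n) ℂ) (v : QIdx n → ℂ) (μ : ℂ)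
    (h : M.mulVec v = μ • v) :
    (NormedSpace.exp M).mulVec v = Complex.exp μ • v := by
  have hsum : Summable fun k : ℕ => (k.factorial⁻¹ : ℂ) • M ^ k :=
    NormedSpace.expSeries_summable' (𝕂 := ℂ) M
  have hμsum : Summable fun k : ℕ => (k.factorial⁻¹ : ℂ) * μ ^ k := by
    simpa [smul_eq_mul] using NormedSpace.expSeries_summable' (𝕂 := ℂ) (𝔸 := ℂ) μ
  calc (NormedSpace.exp M).mulVec v
      = mulVecCLM n v (∑' k : ℕ, (k.factorial⁻¹ : ℂ) • M ^ k) := by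
        rw [NormedSpace.exp_eq_tsum ℂ]
        rfl
    _ = ∑' k : ℕ, mulVecCLM n v ((k.factorial⁻¹ : ℂ) • M ^ k) :=
        (mulVecCLM n v).map_tsum hsum
    _ = ∑' k : ℕ, ((k.factorial⁻¹ : ℂ) * μ ^ k) • v := by
        refine tsum_congr fun k => ?_
        rw [_root_.map_smul, mulVecCLM_apply, pow_mulVec_eigen M v μ h k, smul_smul]
    _ = (∑' k : ℕ, (k.factorial⁻¹ : ℂ) * μ ^ k) • v := hμsum.tsum_smul_const v
    _ = Complex.exp μ • v := by
        congr 1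
        rw [Complex.exp_eq_exp_ℂ, NormedSpace.exp_eq_tsum ℂ]
        simp [smul_eq_mul]

lemma uB_mulVec_plus (n : ℕ) (t : ℝ) :
    (uB n t).mulVec (plusState n) = Complex.exp (Complex.I * n * t) • plusState n := by
  rw [uB]
  refine exp_mulVec_eigen _ _ _ ?_
  rw [Matrix.smul_mulVec, hamB_mulVec_plus, smul_smul]
  congr 1
  ring

lemma uC_zero (n : ℕ) (G : SimpleGraph (Fin n)) [DecidableRel G.Adj] : uC n G 0 = 1 := by
  rw [uC]
  norm_num

lemma uProd_zero (n : ℕ) (G : SimpleGraph (Fin n)) [DecidableRel G.Adj] {q : ℕ}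
    (β γ : Fin q → ℝ) (a : ℕ) : uProd n G β γ a 0 = 1 := rfl

lemma uProd_succ (n : ℕ) (G : SimpleGraph (Fin n)) [DecidableRel G.Adj] {q : ℕ}
    (β γ : Fin q → ℝ) (a len : ℕ) :
    uProd n G β γ a (len + 1) = uProd n G β γ (a + 1) len * qaoaLayer n G β γ a := by
  rw [uProd, uProd, List.range'_succ, List.reverse_cons, List.map_append, List.prod_append]
  simp

lemma qaoaLayer_cons (n : ℕ) (G : SimpleGraph (Fin n)) [DecidableRel G.Adj] {q : ℕ}
    (β γ : Fin q → ℝ) (b c : ℝ) (m : ℕ) :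
    qaoaLayer n G (Fin.cons b β) (Fin.cons c γ) (m + 1) = qaoaLayer n G β γ m := by
  unfold qaoaLayer
  by_cases h : m < q
  · rw [dif_pos (by omega : m + 1 < q + 1), dif_pos h]
    have h1 : (⟨m + 1, by omega⟩ : Fin (q + 1)) = Fin.succ ⟨m, h⟩ := rfl
    rw [h1, Fin.cons_succ, Fin.cons_succ]
  · rw [dif_neg (by omega), dif_neg h]

lemma uProd_cons (n : ℕ) (G : SimpleGraph (Fin n)) [DecidableRel G.Adj] {q : ℕ}
    (β γ : Fin q → ℝ) (b c : ℝ) (a len : ℕ) :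
    uProd n G (Fin.cons b β) (Fin.cons c γ) (a + 1) len = uProd n G β γ a len := by
  induction len generalizing a with
  | zero => rfl
  | succ len ih => rw [uProd_succ, uProd_succ, qaoaLayer_cons, ih]

lemma line_state (n : ℕ) (G : SimpleGraph (Fin n)) [DecidableRel G.Adj] {p : ℕ}
    (β γ : Fin p → ℝ) (t : ℝ) :
    qaoaState n G (Fin.cons t β) (Fin.cons 0 γ) =
      Complex.exp (Complex.I * n * t) • qaoaState n G β γ := by
  rw [qaoaState, uProd_succ, uProd_cons]
  have hlayer : qaoaLayer n G (Fin.cons t β) (Fin.cons (0:ℝ) γ) 0 = uB n t := by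
    rw [qaoaLayer, dif_pos (by omega : 0 < p + 1)]
    have h0 : (⟨0, by omega⟩ : Fin (p + 1)) = 0 := rfl
    rw [h0, Fin.cons_zero, Fin.cons_zero, uC_zero, mul_one]
  rw [hlayer, ← Matrix.mulVec_mulVec, uB_mulVec_plus, Matrix.mulVec_smul, qaoaState]

lemma padded_line {p : ℕ} (β γ : Fin p → ℝ) (t : ℝ) :
    padded (β, γ) 0 0 + t • coordDir (Sum.inl 0) = (Fin.cons t β, Fin.cons 0 γ) := by
  rw [padded, coordDir]
  simp only [Sum.elim_inl, Prod.smul_mk, smul_zero, Prod.mk_add_mk, add_zero,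
    Prod.mk.injEq]
  constructor
  · funext j
    refine Fin.cases ?_ (fun k => ?_) j
    · simp [Fin.insertNth_zero', Pi.single_eq_same]
    · simp [Fin.insertNth_zero', Pi.single_eq_of_ne (Fin.succ_ne_zero k)]
  · funext j
    refine Fin.cases ?_ (fun k => ?_) j
    · simp [Fin.insertNth_zero']
    · simp [Fin.insertNth_zero']

lemma hasDerivAt_expAux (n : ℕ) (A : Matrix (QIdx n) (QIdx n) ℂ) (t : ℝ) :
    HasDerivAt (fun u : ℝ => NormedSpace.exp ((-Complex.I * (u : ℂ)) • A))
      (NormedSpace.exp ((-Complex.I * (t : ℂ)) • A) * ((-Complex.I) • A)) t := by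
  have hcoe : ∀ u : ℝ, ((u : ℂ)) • A = u • A := fun u => by
    rw [show ((u : ℂ)) = u • (1 : ℂ) by simp [Complex.real_smul], smul_assoc, one_smul]
  have key : ∀ u : ℝ,
      NormedSpace.exp ((-Complex.I * (u : ℂ)) • A)
        = NormedSpace.exp (u • ((-Complex.I) • A)) := by
    intro u
    congr 1
    rw [smul_comm, ← hcoe, smul_smul]
  have h := hasDerivAt_exp_smul_const (𝕂 := ℝ) ((-Complex.I) • A) t
  rw [show (fun u : ℝ => NormedSpace.exp ((-Complex.I * (u : ℂ)) • A))
      = fun u : ℝ => NormedSpace.exp (u • ((-Complex.I) • A)) from funext key, key t]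
  exact h

lemma differentiable_uB (n : ℕ) : Differentiable ℝ (uB n) := fun t =>
  ((hasDerivAt_expAux n (hamB n) t).differentiableAt :)

lemma differentiable_uC (n : ℕ) (G : SimpleGraph (Fin n)) [DecidableRel G.Adj] :
    Differentiable ℝ (uC n G) := fun t =>
  ((hasDerivAt_expAux n (hamC n G) t).differentiableAt :)

lemma differentiable_qaoaLayer (n : ℕ) (G : SimpleGraph (Fin n)) [DecidableRel G.Adj]
    {q : ℕ} (m : ℕ) :
    Differentiable ℝ (fun x : (Fin q → ℝ) × (Fin q → ℝ) => qaoaLayer n G x.1 x.2 m) := by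
  unfold qaoaLayer
  by_cases h : m < q
  · simp only [dif_pos h]
    have h1 : Differentiable ℝ (fun x : (Fin q → ℝ) × (Fin q → ℝ) => x.1 ⟨m, h⟩) := by fun_prop
    have h2 : Differentiable ℝ (fun x : (Fin q → ℝ) × (Fin q → ℝ) => x.2 ⟨m, h⟩) := by fun_prop
    exact ((differentiable_uB n).comp h1).mul ((differentiable_uC n G).comp h2)
  · simp only [dif_neg h]
    exact differentiable_const _

lemma differentiable_uProd (n : ℕ) (G : SimpleGraph (Fin n)) [DecidableRel G.Adj]
    {q : ℕ} (a len : ℕ) :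
    Differentiable ℝ (fun x : (Fin q → ℝ) × (Fin q → ℝ) => uProd n G x.1 x.2 a len) := by
  induction len generalizing a with
  | zero =>
      simp only [uProd_zero]
      exact differentiable_const _
  | succ len ih =>
      simp only [uProd_succ]
      exact (ih (a + 1)).mul (differentiable_qaoaLayer n G a)

lemma differentiable_state (n : ℕ) (G : SimpleGraph (Fin n)) [DecidableRel G.Adj] {q : ℕ} :
    Differentiable ℝ (fun x : (Fin q → ℝ) × (Fin q → ℝ) => qaoaState n G x.1 x.2) := by
  have h := differentiable_uProd n G (q := q) 0 q
  exact ((mulVecCLM n (plusState n)).restrictScalars ℝ).differentiable.comp h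

lemma differentiable_quadform (n : ℕ) (G : SimpleGraph (Fin n)) [DecidableRel G.Adj] :
    Differentiable ℝ (fun w : QIdx n → ℂ => (star w ⬝ᵥ (hamC n G).mulVec w).re) := by
  have h1 : Differentiable ℝ (fun w : QIdx n → ℂ => star w ⬝ᵥ (hamC n G).mulVec w) := by
    simp only [dotProduct, Matrix.mulVec, Pi.star_apply]
    refine Differentiable.fun_sum fun s _ => Differentiable.mul ?_ ?_
    · exact Complex.conjCLE.differentiable.comp (differentiable_apply s)
    · exact Differentiable.fun_sum fun u _ =>
        (differentiable_const _).mul (differentiable_apply u)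
  exact Complex.reCLM.differentiable.comp h1

lemma differentiable_energy (n : ℕ) (G : SimpleGraph (Fin n)) [DecidableRel G.Adj] (q : ℕ) :
    Differentiable ℝ (energyE n G q) :=
  (differentiable_quadform n G).comp (differentiable_state n G)

lemma energy_line (n : ℕ) (G : SimpleGraph (Fin n)) [DecidableRel G.Adj]
    {p : ℕ} (β γ : Fin p → ℝ) :
    (fun t : ℝ => energyE n G (p + 1) (Fin.cons t β, Fin.cons 0 γ)) =
      fun _ : ℝ => energyE n G p (β, γ) := by
  funext t
  rw [energyE, energyE]
  congr 1
  simp only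
  rw [line_state]
  rw [star_smul, Matrix.mulVec_smul, smul_dotProduct, dotProduct_smul,
    smul_smul]
  have : star (Complex.exp (Complex.I * n * t)) * Complex.exp (Complex.I * n * t) = 1 := by
    rw [show star (Complex.exp (Complex.I * n * t))
        = Complex.exp (star (Complex.I * n * t)) from (Complex.exp_conj _).symm]
    rw [← Complex.exp_add]
    rw [show star (Complex.I * n * t) = -(Complex.I * n * t) by
      simp [Complex.conj_I]]
    simp
  rw [this, one_smul]

end

end Aux

/-- `|+⟩` is an eigenvector of `H_B` with eigenvalue `-n`; the derivative of the
depth-`(p+1)` state with respect to `β₁` at `Γ^(p+1)(1,1)` is `i n` times the depth-`p` state,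
and `∂E_(p+1)/∂β₁` vanishes there. -/
theorem stmt3 (n : ℕ) (hn : 1 ≤ n) (G : SimpleGraph (Fin n)) [DecidableRel G.Adj]
    (p : ℕ) (hp : 1 ≤ p) (β γ : Fin p → ℝ) :
    (hamB n).mulVec (plusState n) = (-(n : ℂ)) • plusState n ∧
    fderiv ℝ (fun x : (Fin (p + 1) → ℝ) × (Fin (p + 1) → ℝ) => qaoaState n G x.1 x.2)
        (padded (β, γ) 0 0) (coordDir (Sum.inl 0)) =
      (Complex.I * (n : ℂ)) • qaoaState n G β γ ∧
    pderiv' (energyE n G (p + 1)) (Sum.inl 0) (padded (β, γ) 0 0) = 0 := by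
  classical
  have hline : ∀ t : ℝ,
      padded (β, γ) (0 : Fin (p+1)) 0 + t • coordDir (Sum.inl 0) = (Fin.cons t β, Fin.cons 0 γ) :=
    fun t => padded_line β γ t
  set x₀ := padded (β, γ) (0 : Fin (p+1)) 0 with hx₀
  set e := coordDir (p := p + 1) (Sum.inl 0) with he
  have hcurve : HasDerivAt (fun t : ℝ => x₀ + t • e) e 0 := by
    simpa using ((hasDerivAt_id (0 : ℝ)).smul_const e).const_add x₀
  refine ⟨hamB_mulVec_plus n, ?_, ?_⟩
  · -- derivative of the state
    have hF := differentiable_state n G (q := p + 1) (x := x₀)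
    have hF' : HasFDerivAt (fun x : (Fin (p + 1) → ℝ) × (Fin (p + 1) → ℝ) =>
        qaoaState n G x.1 x.2)
        (fderiv ℝ (fun x : (Fin (p + 1) → ℝ) × (Fin (p + 1) → ℝ) =>
          qaoaState n G x.1 x.2) x₀) (x₀ + (0:ℝ) • e) := by
      simpa using hF.hasFDerivAt
    have h1 : HasDerivAt
        (fun t : ℝ => qaoaState n G (x₀ + t • e).1 (x₀ + t • e).2)
        (fderiv ℝ (fun x : (Fin (p + 1) → ℝ) × (Fin (p + 1) → ℝ) =>
          qaoaState n G x.1 x.2) x₀ e) 0 :=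
      (hF'.comp_hasDerivAt 0 hcurve :)
    have h2 : HasDerivAt
        (fun t : ℝ => qaoaState n G (x₀ + t • e).1 (x₀ + t • e).2)
        ((Complex.I * (n : ℂ)) • qaoaState n G β γ) 0 := by
      have heq : (fun t : ℝ => qaoaState n G (x₀ + t • e).1 (x₀ + t • e).2)
          = fun t : ℝ => Complex.exp (Complex.I * n * t) • qaoaState n G β γ := by
        funext t
        rw [hline t]
        exact line_state n G β γ t
      rw [heq]
      have hc : HasDerivAt (fun t : ℝ => Complex.exp (Complex.I * n * t))
          (Complex.I * (n : ℂ)) 0 := by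
        have hz : HasDerivAt (fun z : ℂ => Complex.exp (Complex.I * n * z))
            (Complex.I * (n : ℂ)) ((0 : ℝ) : ℂ) := by
          have := ((Complex.hasDerivAt_exp (Complex.I * n * 0)).comp 0
            (((hasDerivAt_id (0 : ℂ)).const_mul (Complex.I * (n : ℂ)))))
          simp [Function.comp_def] at this
          exact this
        exact hz.comp_ofReal
      simpa using hc.smul_const (qaoaState n G β γ)
    exact h1.unique h2
  · -- derivative of the energy
    rw [pderiv']
    have hE := differentiable_energy n G (p + 1) x₀
    have hE' : HasFDerivAt (energyE n G (p + 1))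
        (fderiv ℝ (energyE n G (p + 1)) x₀) (x₀ + (0:ℝ) • e) := by
      simpa using hE.hasFDerivAt
    have h1 : HasDerivAt (fun t : ℝ => energyE n G (p + 1) (x₀ + t • e))
        (fderiv ℝ (energyE n G (p + 1)) x₀ e) 0 :=
      (hE'.comp_hasDerivAt 0 hcurve :)
    have h2 : HasDerivAt (fun t : ℝ => energyE n G (p + 1) (x₀ + t • e)) 0 0 := by
      have heq : (fun t : ℝ => energyE n G (p + 1) (x₀ + t • e))
          = fun _ : ℝ => energyE n G p (β, γ) := by
        rw [← energy_line n G β γ]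
        funext t
        rw [hline t]
      rw [heq]
      exact hasDerivAt_const 0 _
    exact h1.unique h2
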